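/- Let T ∈ GL(n+1,ℝ) with det T = ±1, and suppose the cyclic semigroup {Tᵐ : m ∈ ℕ} acts distally on Sⁿ via T·x = T(x)/‖T(x)‖. Then {Tᵐ : m ∈ ℕ} is relatively compact in GL(n+1,ℝ). -/

import Mathlib

open Matrix Bornology Filter Topology MulOpposite

attribute [local instance] Matrix.normedAddCommGroup Matrix.normedSpace

/-- The normalized ("projective") action of a matrix on `ℝ^m`. -/
noncomputable def nact {m : ℕ} (A : Matrix (Fin m) (Fin m) ℝ)
    (x : EuclideanSpace ℝ (Fin m)) : EuclideanSpace ℝ (Fin m) :=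
  ‖Matrix.toEuclideanLin A x‖⁻¹ • Matrix.toEuclideanLin A x

private lemma normalize_smul {E : Type*} [NormedAddCommGroup E] [NormedSpace ℝ E]
    {c : ℝ} (hc : 0 < c) (u : E) : ‖c • u‖⁻¹ • (c • u) = ‖u‖⁻¹ • u := by
  rw [norm_smul, Real.norm_eq_abs, abs_of_pos hc, mul_inv, smul_smul]
  congr 1
  rw [mul_comm, ← mul_assoc, mul_inv_cancel₀ hc.ne', one_mul]

private lemma nact_smul {m : ℕ} (A : Matrix (Fin m) (Fin m) ℝ)
    (x : EuclideanSpace ℝ (Fin m)) {c : ℝ} (hc : 0 < c) :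
    nact (c • A) x = nact A x := by
  simp only [nact, _root_.map_smul, LinearMap.smul_apply]
  exact normalize_smul hc _

private lemma continuous_toEuclideanLin_apply {m : ℕ} (x : EuclideanSpace ℝ (Fin m)) :
    Continuous fun A : Matrix (Fin m) (Fin m) ℝ => Matrix.toEuclideanLin A x :=
  letI f : Matrix (Fin m) (Fin m) ℝ →ₗ[ℝ] EuclideanSpace ℝ (Fin m) :=
    { toFun := fun A => Matrix.toEuclideanLin A x
      map_add' := fun A B => by simp [_root_.map_add]
      map_smul' := fun c A => by simp [_root_.map_smul] }
  f.continuous_of_finiteDimensional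

private lemma pow_bounded (n : ℕ) (T : GL (Fin (n + 1)) ℝ)
    (hdet : |(T : Matrix (Fin (n + 1)) (Fin (n + 1)) ℝ).det| = 1)
    (hdistal : ∀ x y : EuclideanSpace ℝ (Fin (n + 1)), ‖x‖ = 1 → ‖y‖ = 1 → x ≠ y →
      ∃ ε > (0 : ℝ), ∀ m : ℕ,
        ε ≤ ‖nact ((T ^ (m + 1) : GL (Fin (n + 1)) ℝ) : Matrix (Fin (n + 1)) (Fin (n + 1)) ℝ) x -
             nact ((T ^ (m + 1) : GL (Fin (n + 1)) ℝ) : Matrix (Fin (n + 1)) (Fin (n + 1)) ℝ) y‖) :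
    ∃ C : ℝ, ∀ m : ℕ,
      ‖((T ^ (m + 1) : GL (Fin (n + 1)) ℝ) : Matrix (Fin (n + 1)) (Fin (n + 1)) ℝ)‖ ≤ C := by
  set M : ℕ → Matrix (Fin (n + 1)) (Fin (n + 1)) ℝ :=
    fun m => ((T ^ (m + 1) : GL (Fin (n + 1)) ℝ) : Matrix (Fin (n + 1)) (Fin (n + 1)) ℝ) with hMdef
  have hMdet : ∀ m, |(M m).det| = 1 := by
    intro m
    have h1 : M m = ((T : Matrix (Fin (n + 1)) (Fin (n + 1)) ℝ)) ^ (m + 1) := by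
      simp [hMdef, Units.val_pow_eq_pow_val]
    rw [h1, Matrix.det_pow, abs_pow, hdet, one_pow]
  have hMpos : ∀ m, 0 < ‖M m‖ := by
    intro m
    rw [norm_pos_iff]
    intro h
    have h2 := hMdet m
    rw [h, Matrix.det_zero] at h2
    norm_num at h2
  by_contra hb
  push_neg at hb
  choose g hg using fun k : ℕ => hb ((k : ℝ) + 1)
  set A : ℕ → Matrix (Fin (n + 1)) (Fin (n + 1)) ℝ :=
    fun k => ‖M (g k)‖⁻¹ • M (g k) with hAdef
  have hAs : ∀ k, A k ∈ Metric.sphere (0 : Matrix (Fin (n + 1)) (Fin (n + 1)) ℝ) 1 := by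
    intro k
    simp only [mem_sphere_iff_norm, sub_zero, hAdef, norm_smul, norm_inv, norm_norm]
    exact inv_mul_cancel₀ (hMpos (g k)).ne'
  obtain ⟨B, hBs, φ, hφ, hBlim⟩ :=
    (isCompact_sphere (0 : Matrix (Fin (n + 1)) (Fin (n + 1)) ℝ) 1).tendsto_subseq hAs
  have hBnorm : ‖B‖ = 1 := by simpa [mem_sphere_iff_norm] using hBs
  have hdetA : ∀ k, |(A k).det| ≤ ((k : ℝ) + 1)⁻¹ := by
    intro k
    have h0 : (0 : ℝ) < (k : ℝ) + 1 := by positivity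
    have h1 : ‖M (g k)‖⁻¹ ≤ ((k : ℝ) + 1)⁻¹ := by
      apply inv_anti₀ h0 (hg k).le
    have h2 : (0 : ℝ) ≤ ‖M (g k)‖⁻¹ := by positivity
    have h3 : ‖M (g k)‖⁻¹ ≤ 1 := by
      calc ‖M (g k)‖⁻¹ ≤ ((k : ℝ) + 1)⁻¹ := h1
        _ ≤ 1 := by
          rw [inv_le_one_iff₀]
          right; linarith [Nat.cast_nonneg (α := ℝ) k]
    have h4 : (A k).det = (‖M (g k)‖⁻¹) ^ Fintype.card (Fin (n + 1)) * (M (g k)).det := by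
      simp [hAdef, Matrix.det_smul]
    rw [h4, abs_mul, abs_pow, abs_of_nonneg h2, hMdet]
    rw [mul_one, Fintype.card_fin]
    calc ‖M (g k)‖⁻¹ ^ (n + 1) ≤ ‖M (g k)‖⁻¹ ^ 1 :=
          pow_le_pow_of_le_one h2 h3 (by omega)
      _ = ‖M (g k)‖⁻¹ := pow_one _
      _ ≤ ((k : ℝ) + 1)⁻¹ := h1
  have hdetB : B.det = 0 := by
    have h1 : Tendsto (fun k => (A (φ k)).det) atTop (𝓝 B.det) :=
      ((continuous_id.matrix_det).tendsto B).comp hBlim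
    have h2 : Tendsto (fun k => (A (φ k)).det) atTop (𝓝 0) := by
      apply squeeze_zero_norm (fun k => ?_) tendsto_one_div_add_atTop_nhds_zero_nat
      rw [Real.norm_eq_abs, one_div]
      calc |(A (φ k)).det| ≤ ((φ k : ℝ) + 1)⁻¹ := hdetA (φ k)
        _ ≤ ((k : ℝ) + 1)⁻¹ := by
            apply inv_anti₀ (by positivity)
            have h5 : (k : ℝ) ≤ (φ k : ℝ) := Nat.cast_le.mpr hφ.le_apply
            linarith
    exact tendsto_nhds_unique h1 h2
  -- a unit vector in the kernel of B
  obtain ⟨v0, hv0ne, hv0⟩ := Matrix.exists_mulVec_eq_zero_iff.mpr hdetB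
  set v1 : EuclideanSpace ℝ (Fin (n + 1)) := (WithLp.equiv 2 _).symm v0 with hv1def
  have hv1 : Matrix.toEuclideanLin B v1 = 0 := by
    rw [hv1def, WithLp.equiv_symm_apply, Matrix.toEuclideanLin_apply_piLp_toLp, hv0]
    rfl
  have hv1ne : v1 ≠ 0 := by
    intro h
    apply hv0ne
    have := congrArg (WithLp.equiv 2 (Fin (n + 1) → ℝ)) h
    simpa [hv1def] using this
  -- a vector not in the kernel
  have hBne : B ≠ 0 := by
    intro h
    rw [h, norm_zero] at hBnorm
    norm_num at hBnorm
  obtain ⟨w, hw⟩ : ∃ w, Matrix.toEuclideanLin B w ≠ 0 := by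
    by_contra hall
    push_neg at hall
    apply hBne
    have h1 : Matrix.toEuclideanLin B = 0 := LinearMap.ext fun w => hall w
    exact Matrix.toEuclideanLin.map_eq_zero_iff.mp h1
  have hwne : w ≠ 0 := by
    intro h
    apply hw
    rw [h, _root_.map_zero]
  set x : EuclideanSpace ℝ (Fin (n + 1)) := ‖w‖⁻¹ • w with hxdef
  set v : EuclideanSpace ℝ (Fin (n + 1)) := ‖v1‖⁻¹ • v1 with hvdef
  have hx1 : ‖x‖ = 1 := norm_smul_inv_norm hwne
  have hvu : ‖v‖ = 1 := norm_smul_inv_norm hv1ne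
  have hLv : Matrix.toEuclideanLin B v = 0 := by
    rw [hvdef, _root_.map_smul, hv1, smul_zero]
  have hLx : Matrix.toEuclideanLin B x ≠ 0 := by
    rw [hxdef, _root_.map_smul]
    exact smul_ne_zero (inv_ne_zero (norm_ne_zero_iff.mpr hwne)) hw
  have hxv : x + v ≠ 0 := by
    intro h
    have hveq : v = -x := eq_neg_of_add_eq_zero_right h
    rw [hveq, _root_.map_neg, neg_eq_zero] at hLv
    exact hLx hLv
  set y : EuclideanSpace ℝ (Fin (n + 1)) := ‖x + v‖⁻¹ • (x + v) with hydef
  have hy1 : ‖y‖ = 1 := norm_smul_inv_norm hxv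
  have hLy : Matrix.toEuclideanLin B y = ‖x + v‖⁻¹ • Matrix.toEuclideanLin B x := by
    rw [hydef, _root_.map_smul, _root_.map_add, hLv, add_zero]
  have hLyne : Matrix.toEuclideanLin B y ≠ 0 := by
    rw [hLy]
    exact smul_ne_zero (inv_ne_zero (norm_ne_zero_iff.mpr hxv)) hLx
  have hxy : x ≠ y := by
    intro h
    have hc : ‖x + v‖⁻¹ = 1 := by
      have h1 : (1 - ‖x + v‖⁻¹) • Matrix.toEuclideanLin B x = 0 := by
        rw [sub_smul, one_smul, ← hLy, ← h, sub_self]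
      rcases smul_eq_zero.mp h1 with h2 | h2
      · have := sub_eq_zero.mp h2
        linarith
      · exact absurd h2 hLx
    have hn1 : ‖x + v‖ = 1 := by rwa [inv_eq_one] at hc
    have hyv : y = x + v := by rw [hydef, hn1, inv_one, one_smul]
    have hveq : v = 0 := by
      have h3 : x = x + v := h.trans hyv
      have := left_eq_add.mp h3
      exact this
    rw [hveq, norm_zero] at hvu
    norm_num at hvu
  obtain ⟨ε, hε, hεm⟩ := hdistal x y hx1 hy1 hxy
  have hnBxy : nact B y = nact B x := by
    simp only [nact]
    rw [hLy]
    exact normalize_smul (inv_pos.mpr (norm_pos_iff.mpr hxv)) _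
  have hcx := ((continuous_toEuclideanLin_apply x).tendsto B).comp hBlim
  have hcy := ((continuous_toEuclideanLin_apply y).tendsto B).comp hBlim
  have hnx : Tendsto (fun k => nact (A (φ k)) x) atTop (𝓝 (nact B x)) := by
    simp only [nact]
    exact (hcx.norm.inv₀ (norm_ne_zero_iff.mpr hLx)).smul hcx
  have hny : Tendsto (fun k => nact (A (φ k)) y) atTop (𝓝 (nact B y)) := by
    simp only [nact]
    exact (hcy.norm.inv₀ (norm_ne_zero_iff.mpr hLyne)).smul hcy
  have hdiff : Tendsto (fun k => ‖nact (A (φ k)) x - nact (A (φ k)) y‖) atTop (𝓝 0) := by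
    have h1 := (hnx.sub hny).norm
    rwa [hnBxy, sub_self, norm_zero] at h1
  have hkey : ∀ k, ε ≤ ‖nact (A (φ k)) x - nact (A (φ k)) y‖ := by
    intro k
    have h1 := hεm (g (φ k))
    have e1 : nact (A (φ k)) x = nact (M (g (φ k))) x :=
      nact_smul _ _ (inv_pos.mpr (hMpos (g (φ k))))
    have e2 : nact (A (φ k)) y = nact (M (g (φ k))) y :=
      nact_smul _ _ (inv_pos.mpr (hMpos (g (φ k))))
    rw [e1, e2]
    exact h1
  have : ε ≤ 0 := ge_of_tendsto hdiff (Eventually.of_forall hkey)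
  linarith

theorem stmt7 (n : ℕ) (T : GL (Fin (n + 1)) ℝ)
    (hdet : |(T : Matrix (Fin (n + 1)) (Fin (n + 1)) ℝ).det| = 1)
    (hdistal : ∀ x y : EuclideanSpace ℝ (Fin (n + 1)), ‖x‖ = 1 → ‖y‖ = 1 → x ≠ y →
      ∃ ε > (0 : ℝ), ∀ m : ℕ,
        ε ≤ ‖nact ((T ^ (m + 1) : GL (Fin (n + 1)) ℝ) : Matrix (Fin (n + 1)) (Fin (n + 1)) ℝ) x -
             nact ((T ^ (m + 1) : GL (Fin (n + 1)) ℝ) : Matrix (Fin (n + 1)) (Fin (n + 1)) ℝ) y‖) :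
    IsCompact (closure (Set.range fun m : ℕ => T ^ (m + 1))) := by
  obtain ⟨C, hC⟩ := pow_bounded n T hdet hdistal
  set s : Set (GL (Fin (n + 1)) ℝ) := Set.range fun m : ℕ => T ^ (m + 1) with hsdef
  set K1 : Set (Matrix (Fin (n + 1)) (Fin (n + 1)) ℝ) :=
    closure (Set.range fun m : ℕ =>
      ((T ^ (m + 1) : GL (Fin (n + 1)) ℝ) : Matrix (Fin (n + 1)) (Fin (n + 1)) ℝ)) with hK1def
  have hK1 : IsCompact K1 := by
    apply Bornology.IsBounded.isCompact_closure
    rw [isBounded_iff_forall_norm_le]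
    exact ⟨C, by rintro _ ⟨m, rfl⟩; exact hC m⟩
  set F : Matrix (Fin (n + 1)) (Fin (n + 1)) ℝ →
      Matrix (Fin (n + 1)) (Fin (n + 1)) ℝ × (Matrix (Fin (n + 1)) (Fin (n + 1)) ℝ)ᵐᵒᵖ :=
    fun P => (P, op (P.det • P.adjugate)) with hFdef
  have hF : Continuous F := by
    apply continuous_id.prodMk
    exact MulOpposite.continuous_op.comp
      ((continuous_id.matrix_det).smul (continuous_id.matrix_adjugate))
  have hFK : IsCompact (F '' K1) := hK1.image hF
  set e : GL (Fin (n + 1)) ℝ →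
      Matrix (Fin (n + 1)) (Fin (n + 1)) ℝ × (Matrix (Fin (n + 1)) (Fin (n + 1)) ℝ)ᵐᵒᵖ :=
    ⇑(Units.embedProduct (Matrix (Fin (n + 1)) (Fin (n + 1)) ℝ)) with hedef
  have hdetpow : ∀ m : ℕ,
      (((T ^ (m + 1) : GL (Fin (n + 1)) ℝ) : Matrix (Fin (n + 1)) (Fin (n + 1)) ℝ)).det⁻¹ =
      (((T ^ (m + 1) : GL (Fin (n + 1)) ℝ) : Matrix (Fin (n + 1)) (Fin (n + 1)) ℝ)).det := by
    intro m
    have h1 : |(((T ^ (m + 1) : GL (Fin (n + 1)) ℝ) :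
        Matrix (Fin (n + 1)) (Fin (n + 1)) ℝ)).det| = 1 := by
      rw [Units.val_pow_eq_pow_val, Matrix.det_pow, abs_pow, hdet, one_pow]
    rcases (abs_eq (by norm_num : (0:ℝ) ≤ 1)).mp h1 with h | h <;> rw [h] <;> norm_num
  have hsub : e '' s ⊆ F '' K1 := by
    rintro _ ⟨_, ⟨m, rfl⟩, rfl⟩
    refine ⟨((T ^ (m + 1) : GL (Fin (n + 1)) ℝ) : Matrix (Fin (n + 1)) (Fin (n + 1)) ℝ),
      subset_closure ⟨m, rfl⟩, ?_⟩
    have h2 : ((((T ^ (m + 1) : GL (Fin (n + 1)) ℝ))⁻¹ : GL (Fin (n + 1)) ℝ) :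
          Matrix (Fin (n + 1)) (Fin (n + 1)) ℝ)
        = ((T ^ (m + 1) : GL (Fin (n + 1)) ℝ) : Matrix (Fin (n + 1)) (Fin (n + 1)) ℝ).det •
          ((T ^ (m + 1) : GL (Fin (n + 1)) ℝ) : Matrix (Fin (n + 1)) (Fin (n + 1)) ℝ).adjugate := by
      rw [Matrix.coe_units_inv, Matrix.inv_def, Ring.inverse_eq_inv', hdetpow m]
    show F _ = e ((fun m : ℕ => T ^ (m + 1)) m)
    have h3 : ((fun m : ℕ => T ^ (m + 1)) m) = T ^ (m + 1) := rfl
    rw [h3]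
    exact Prod.ext rfl (congrArg op h2.symm)
  have hrange : IsClosed (Set.range e) := by
    have h1 : Set.range e = {p : Matrix (Fin (n + 1)) (Fin (n + 1)) ℝ ×
        (Matrix (Fin (n + 1)) (Fin (n + 1)) ℝ)ᵐᵒᵖ |
        p.1 * unop p.2 = 1 ∧ unop p.2 * p.1 = 1} := by
      ext p
      constructor
      · rintro ⟨u, rfl⟩
        exact ⟨Units.mul_inv u, Units.inv_mul u⟩
      · rintro ⟨ha, hb⟩
        exact ⟨⟨p.1, unop p.2, ha, hb⟩, rfl⟩
    rw [h1]
    have h2 : IsClosed {p : Matrix (Fin (n + 1)) (Fin (n + 1)) ℝ ×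
        (Matrix (Fin (n + 1)) (Fin (n + 1)) ℝ)ᵐᵒᵖ | p.1 * unop p.2 = 1} :=
      isClosed_eq (continuous_fst.mul (MulOpposite.continuous_unop.comp continuous_snd))
        continuous_const
    have h3 : IsClosed {p : Matrix (Fin (n + 1)) (Fin (n + 1)) ℝ ×
        (Matrix (Fin (n + 1)) (Fin (n + 1)) ℝ)ᵐᵒᵖ | unop p.2 * p.1 = 1} :=
      isClosed_eq ((MulOpposite.continuous_unop.comp continuous_snd).mul continuous_fst)
        continuous_const
    exact h2.inter h3
  have hclos : closure (e '' s) ⊆ F '' K1 := closure_minimal hsub hFK.isClosed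
  have hcs : IsCompact (e '' closure s) := by
    have h1 : e '' closure s = closure (e '' s) ∩ Set.range e := by
      rw [Units.isEmbedding_embedProduct.closure_eq_preimage_closure_image s,
        Set.image_preimage_eq_inter_range]
    rw [h1]
    exact hFK.of_isClosed_subset (isClosed_closure.inter hrange)
      ((Set.inter_subset_left).trans hclos)
  exact Units.isEmbedding_embedProduct.isCompact_iff.mpr hcs
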